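/- Let c > 0, α ∈ (0,1), h > 0, and set φ_k = (α/(2ke))·((c^(−α)+h)/h)^(1/α) and τ_k = c·φ_k²·exp(2W(2k/(φ_k α))). Then τ_k → +∞ as k → ∞; moreover x_k := (c/τ_k)^(1/2) = (φ_k·exp(W(2k/(φ_k α))))^(−1) → 0 and k·x_k → ∞ as k → ∞. -/

import Mathlib

open Filter

private lemma lambert_lower {yv w : ℝ} (hw : 0 < w) (he : w * Real.exp w = yv) :
    Real.log yv ≤ 2 * w := by
  have hy : 0 < yv := he ▸ by positivity
  have hwle : w ≤ Real.exp w := by linarith [Real.add_one_le_exp w]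
  have h1 : yv ≤ Real.exp (2 * w) := by
    calc yv = w * Real.exp w := he.symm
      _ ≤ Real.exp w * Real.exp w :=
          mul_le_mul_of_nonneg_right hwle (Real.exp_pos w).le
      _ = Real.exp (2 * w) := by rw [two_mul, Real.exp_add]
  calc Real.log yv ≤ Real.log (Real.exp (2 * w)) := Real.log_le_log hy h1
    _ = 2 * w := Real.log_exp _

private lemma lambert_upper {yv w : ℝ} (hw : 0 < w) (he : w * Real.exp w = yv)
    (hy : 1 ≤ yv) : w ≤ 1 + Real.log yv := by
  rcases le_or_gt w 1 with h1 | h1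
  · have := Real.log_nonneg hy; linarith
  · have hexple : Real.exp w ≤ yv := by
      calc Real.exp w = 1 * Real.exp w := (one_mul _).symm
        _ ≤ w * Real.exp w := mul_le_mul_of_nonneg_right h1.le (Real.exp_pos w).le
        _ = yv := he
    have h2 : w ≤ Real.log yv := by
      have := Real.log_le_log (Real.exp_pos w) hexple
      rwa [Real.log_exp] at this
    linarith

/-- The parameters τ_k tend to infinity; x_k = (c/τ_k)^(1/2) equals
(φ_k exp(W(2k/(φ_k α))))⁻¹, tends to 0, and k·x_k → ∞. -/
theorem tau_k_asymptotics (c h α : ℝ) (hc : 0 < c) (hh : 0 < h)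
    (hα : 0 < α) (hα1 : α < 1)
    (W : ℝ → ℝ) (hW : ∀ y : ℝ, 0 < y → W y * Real.exp (W y) = y ∧ 0 < W y)
    (φ τ x : ℕ → ℝ)
    (hφ : ∀ k : ℕ, φ k = (α / (2 * (k : ℝ) * Real.exp 1)) * ((c ^ (-α) + h) / h) ^ (1 / α))
    (hτ : ∀ k : ℕ, τ k = c * (φ k) ^ 2 * Real.exp (2 * W (2 * (k : ℝ) / (φ k * α))))
    (hx : ∀ k : ℕ, x k = (c / τ k) ^ ((1 : ℝ)/2)) :
    Tendsto τ atTop atTop ∧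
    (∀ k : ℕ, 1 ≤ k →
      x k = (φ k * Real.exp (W (2 * (k : ℝ) / (φ k * α))))⁻¹) ∧
    Tendsto x atTop (nhds 0) ∧
    Tendsto (fun k : ℕ => (k : ℝ) * x k) atTop atTop := by
  have he : (0:ℝ) < Real.exp 1 := Real.exp_pos 1
  set M : ℝ := ((c ^ (-α) + h) / h) ^ (1 / α) with hMdef
  have hM : 0 < M := Real.rpow_pos_of_pos (div_pos (by positivity) hh) _
  set D : ℝ := 4 * Real.exp 1 / (α ^ 2 * M) with hDdef
  have hD : 0 < D := by positivity
  -- positivity of φ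
  have hφpos : ∀ k : ℕ, 1 ≤ k → 0 < φ k := by
    intro k hk
    have hk' : (0:ℝ) < k := by exact_mod_cast hk
    rw [hφ]; positivity
  -- explicit form of the Lambert argument
  have hyD : ∀ k : ℕ, 1 ≤ k → 2 * (k:ℝ) / (φ k * α) = D * (k:ℝ) ^ 2 := by
    intro k hk
    have hk' : (0:ℝ) < k := by exact_mod_cast hk
    rw [hφ, hDdef]
    field_simp
    ring
  have hypos : ∀ k : ℕ, 1 ≤ k → 0 < D * (k:ℝ) ^ 2 := by
    intro k hk
    have hk' : (0:ℝ) < k := by exact_mod_cast hk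
    positivity
  -- formula for x k
  have hA : ∀ k : ℕ, 1 ≤ k →
      x k = (φ k * Real.exp (W (2 * (k : ℝ) / (φ k * α))))⁻¹ := by
    intro k hk
    have hφk := hφpos k hk
    set a : ℝ := φ k * Real.exp (W (2 * (k : ℝ) / (φ k * α))) with hadef
    have ha : 0 < a := by positivity
    have hτa : τ k = c * a ^ 2 := by
      rw [hτ, hadef, two_mul, Real.exp_add]; ring
    have hca : c / τ k = (a⁻¹) ^ 2 := by
      rw [hτa]
      field_simp
    rw [hx, hca, ← Real.sqrt_eq_rpow, Real.sqrt_sq (by positivity)]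
  -- x k = α W(D k²) / (2 k)
  have hB : ∀ k : ℕ, 1 ≤ k → x k = α * W (D * (k:ℝ) ^ 2) / (2 * (k:ℝ)) := by
    intro k hk
    have hk' : (0:ℝ) < k := by exact_mod_cast hk
    have hφk := hφpos k hk
    obtain ⟨hWe, hWpos⟩ := hW _ (hypos k hk)
    have hexp : Real.exp (W (D * (k:ℝ) ^ 2)) = D * (k:ℝ) ^ 2 / W (D * (k:ℝ) ^ 2) := by
      rw [eq_div_iff hWpos.ne']
      linarith [hWe]
    rw [hA k hk, hyD k hk, hexp]
    rw [← hyD k hk]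
    have hne : W (D * (k:ℝ) ^ 2) ≠ 0 := hWpos.ne'
    field_simp
  -- x k positive
  have hxpos : ∀ k : ℕ, 1 ≤ k → 0 < x k := by
    intro k hk
    have hk' : (0:ℝ) < k := by exact_mod_cast hk
    obtain ⟨hWe, hWpos⟩ := hW _ (hypos k hk)
    rw [hB k hk]
    positivity
  -- τ k = c / x k ^ 2
  have hτx : ∀ k : ℕ, 1 ≤ k → τ k = c / x k ^ 2 := by
    intro k hk
    have hφk := hφpos k hk
    have ha : (0:ℝ) < φ k * Real.exp (W (2 * (k : ℝ) / (φ k * α))) := by positivity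
    rw [hA k hk, hτ, two_mul, Real.exp_add]
    field_simp
  -- the eventual upper bound on x
  have hDk2 : Tendsto (fun k : ℕ => D * (k:ℝ) ^ 2) atTop atTop := by
    apply Tendsto.const_mul_atTop hD
    exact (tendsto_pow_atTop (by norm_num)).comp tendsto_natCast_atTop_atTop
  have hev1 : ∀ᶠ k : ℕ in atTop, 1 ≤ D * (k:ℝ) ^ 2 := hDk2.eventually_ge_atTop 1
  have hevk : ∀ᶠ k : ℕ in atTop, 1 ≤ k := eventually_ge_atTop 1
  -- x → 0
  have hlogk : Tendsto (fun k : ℕ => Real.log k / (k:ℝ)) atTop (nhds 0) := by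
    have := (Real.tendsto_pow_log_div_mul_add_atTop 1 0 1 one_ne_zero).comp
      tendsto_natCast_atTop_atTop
    simpa [Function.comp_def] using this
  have hinvk : Tendsto (fun k : ℕ => ((k:ℝ))⁻¹) atTop (nhds 0) :=
    tendsto_inv_atTop_zero.comp tendsto_natCast_atTop_atTop
  have hx0 : Tendsto x atTop (nhds 0) := by
    apply squeeze_zero' (hevk.mono fun k hk => (hxpos k hk).le)
    · filter_upwards [hevk, hev1] with k hk h1k
      have hk' : (0:ℝ) < k := by exact_mod_cast hk
      obtain ⟨hWe, hWpos⟩ := hW _ (hypos k hk)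
      have hub : W (D * (k:ℝ) ^ 2) ≤ 1 + Real.log (D * (k:ℝ) ^ 2) :=
        lambert_upper hWpos hWe h1k
      have hlog : Real.log (D * (k:ℝ) ^ 2) = Real.log D + 2 * Real.log k := by
        rw [Real.log_mul hD.ne' (by positivity), Real.log_pow]
        push_cast; ring
      have : x k ≤ α * (1 + (Real.log D + 2 * Real.log k)) / (2 * (k:ℝ)) := by
        rw [hB k hk]
        gcongr
        rw [← hlog]; exact hub
      calc x k ≤ α * (1 + (Real.log D + 2 * Real.log k)) / (2 * (k:ℝ)) := this
        _ = α * (1 + Real.log D) / 2 * ((k:ℝ))⁻¹ + α * (Real.log k / (k:ℝ)) := by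
            field_simp; ring
    · have h1 : Tendsto (fun k : ℕ => α * (1 + Real.log D) / 2 * ((k:ℝ))⁻¹)
          atTop (nhds 0) := by
        simpa using hinvk.const_mul (α * (1 + Real.log D) / 2)
      have h2 : Tendsto (fun k : ℕ => α * (Real.log k / (k:ℝ))) atTop (nhds 0) := by
        simpa using hlogk.const_mul α
      simpa using h1.add h2
  -- τ → ∞
  have hτtop : Tendsto τ atTop atTop := by
    have hsq : Tendsto (fun k : ℕ => x k ^ 2) atTop (nhds 0) := by
      simpa using hx0.pow 2
    have hsq' : Tendsto (fun k : ℕ => x k ^ 2) atTop (nhdsWithin 0 (Set.Ioi 0)) := by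
      apply tendsto_nhdsWithin_of_tendsto_nhds_of_eventually_within _ hsq
      filter_upwards [hevk] with k hk
      exact pow_pos (hxpos k hk) 2
    have hinv : Tendsto (fun k : ℕ => (x k ^ 2)⁻¹) atTop atTop :=
      tendsto_inv_nhdsGT_zero.comp hsq'
    have := hinv.const_mul_atTop hc
    apply this.congr'
    filter_upwards [hevk] with k hk
    rw [hτx k hk, div_eq_mul_inv]
  -- k x k → ∞
  have hkx : Tendsto (fun k : ℕ => (k : ℝ) * x k) atTop atTop := by
    have hlow : Tendsto (fun k : ℕ => α / 4 * Real.log D + α / 2 * Real.log k)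
        atTop atTop := by
      apply tendsto_atTop_add_const_left
      exact (Real.tendsto_log_atTop.comp tendsto_natCast_atTop_atTop).const_mul_atTop
        (by positivity)
    apply tendsto_atTop_mono' _ _ hlow
    filter_upwards [hevk] with k hk
    have hk' : (0:ℝ) < k := by exact_mod_cast hk
    obtain ⟨hWe, hWpos⟩ := hW _ (hypos k hk)
    have hlb : Real.log (D * (k:ℝ) ^ 2) ≤ 2 * W (D * (k:ℝ) ^ 2) :=
      lambert_lower hWpos hWe
    have hlog : Real.log (D * (k:ℝ) ^ 2) = Real.log D + 2 * Real.log k := by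
      rw [Real.log_mul hD.ne' (by positivity), Real.log_pow]
      push_cast; ring
    have hkxeq : (k:ℝ) * x k = α * W (D * (k:ℝ) ^ 2) / 2 := by
      rw [hB k hk]; field_simp
    rw [hkxeq]
    rw [hlog] at hlb
    nlinarith [hα.le]
  exact ⟨hτtop, hA, hx0, hkx⟩
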